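/- Let q ≥ 2, let D be a subgroup of the symmetric group Sym(q) of permutations of a q-element set, and let n ≥ 3q − 1. Consider the simple graph whose vertices are pairs (x, c), where x is a q-element subset of {1, …, n} and c is a left coset in Sym(q)/D, and where two vertices (x₁, c₁) and (x₂, c₂) are adjacent if and only if the subsets x₁ and x₂ are disjoint. Then this graph is connected (in particular nonempty). -/

import Mathlib

/-- The graph whose vertices are `q`-element subsets of `{1, …, n}` decorated by a left coset of
`D` in `Sym(q)`, with two vertices adjacent iff their underlying subsets are disjoint. -/
def decoratedDisjointnessGraph (q n : ℕ) (hq : 0 < q) (D : Subgroup (Equiv.Perm (Fin q))) :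
    SimpleGraph (({x : Finset (Fin n) // x.card = q}) × (Equiv.Perm (Fin q) ⧸ D)) where
  Adj v w := Disjoint (v.1 : Finset (Fin n)) (w.1 : Finset (Fin n))
  symm := ⟨fun v w h => h.symm⟩
  loopless := ⟨fun v h => by
    have h0 : (v.1 : Finset (Fin n)) = ⊥ := disjoint_self.mp h
    have hc := v.1.2
    rw [h0] at hc
    simp only [Finset.bot_eq_empty, Finset.card_empty] at hc
    omega⟩

/-- For `q ≥ 2`, any subgroup `D ≤ Sym(q)` and `n ≥ 3q - 1`, the graph of `Sym(q)/D`-decorated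
`q`-element subsets of `{1, …, n}`, with adjacency given by disjointness, is connected. -/
theorem stmt7 (q n : ℕ) (hq : 2 ≤ q) (D : Subgroup (Equiv.Perm (Fin q)))
    (hn : 3 * q - 1 ≤ n) :
    (decoratedDisjointnessGraph q n (by omega) D).Connected := by
  have hqn : q ≤ n := by omega
  have hne : Nonempty (({x : Finset (Fin n) // x.card = q}) × (Equiv.Perm (Fin q) ⧸ D)) := by
    have : q ≤ (Finset.univ : Finset (Fin n)).card := by
      simp only [Finset.card_univ, Fintype.card_fin]; omega
    obtain ⟨s, _, hs⟩ := Finset.exists_subset_card_eq this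
    exact ⟨(⟨s, hs⟩, Quotient.mk'' 1)⟩
  refine SimpleGraph.Connected.mk ?_
  · -- preconnected
    intro v w
    by_cases hd : Disjoint (v.1 : Finset (Fin n)) (w.1 : Finset (Fin n))
    · exact SimpleGraph.Adj.reachable hd
    · -- find z disjoint from both
      have hcard : ((v.1 : Finset (Fin n)) ∪ w.1).card ≤ 2 * q - 1 := by
        have hinter : 0 < ((v.1 : Finset (Fin n)) ∩ w.1).card := by
          rw [Finset.card_pos]
          rw [Finset.disjoint_iff_inter_eq_empty] at hd
          exact Finset.nonempty_iff_ne_empty.mpr hd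
        have := Finset.card_union_add_card_inter (v.1 : Finset (Fin n)) w.1
        have h1 := v.1.2; have h2 := w.1.2
        omega
      have hcompl : q ≤ (Finset.univ \ ((v.1 : Finset (Fin n)) ∪ w.1)).card := by
        rw [Finset.card_sdiff_of_subset (Finset.subset_univ _)]
        simp only [Finset.card_univ, Fintype.card_fin]
        omega
      obtain ⟨z, hz, hzc⟩ := Finset.exists_subset_card_eq hcompl
      have hzv : Disjoint z (v.1 : Finset (Fin n)) := by
        refine Finset.disjoint_left.mpr fun a ha hav => ?_
        have := hz ha
        simp only [Finset.mem_sdiff, Finset.mem_union] at this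
        exact this.2 (Or.inl hav)
      have hzw : Disjoint z (w.1 : Finset (Fin n)) := by
        refine Finset.disjoint_left.mpr fun a ha hav => ?_
        have := hz ha
        simp only [Finset.mem_sdiff, Finset.mem_union] at this
        exact this.2 (Or.inr hav)
      let zv : ({x : Finset (Fin n) // x.card = q}) × (Equiv.Perm (Fin q) ⧸ D) :=
        (⟨z, hzc⟩, v.2)
      have h1 : (decoratedDisjointnessGraph q n (by omega) D).Adj v zv := hzv.symm
      have h2 : (decoratedDisjointnessGraph q n (by omega) D).Adj zv w := hzw
      exact (SimpleGraph.Adj.reachable h1).trans (SimpleGraph.Adj.reachable h2)
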